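/- Let (X,T) be a TDS with h_top(T) < ∞ and Φ_1,…,Φ_k asymptotically sub-additive potentials with β̄(Φ_1+…+Φ_k) > -∞. Then the pressure function P_Φ(q) = P(T, q·Φ) is a real continuous convex function on the open positive orthant ℝ_+^k, and every subgradient a = (a_1,…,a_k) of P_Φ at any point of ℝ_+^k satisfies a_i ≤ β̄(Φ_i) for all i. -/

import Mathlib

open MeasureTheory Filter Topology Set
open scoped ENNReal NNReal

noncomputable section

/-- Extended logarithm of a nonnegative real number, with `elog 0 = ⊥`. -/
def elog (r : ℝ) : EReal := if r = 0 then ⊥ else ((Real.log r : ℝ) : EReal)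

/-- Extended logarithm on `ℝ≥0∞`. -/
def elogENN (a : ℝ≥0∞) : EReal :=
  if a = 0 then ⊥ else if a = ⊤ then ⊤ else ((Real.log a.toReal : ℝ) : EReal)

variable {X : Type*} [MetricSpace X] [CompactSpace X] [MeasurableSpace X] [BorelSpace X]

/-- A potential: each `φ n` is continuous and nonnegative.  The potential itself is
the sequence `{log φ n}` with values in `ℝ ∪ {-∞}`. -/
def IsPotential (φ : ℕ → X → ℝ) : Prop :=
  ∀ n, Continuous (φ n) ∧ ∀ x, 0 ≤ φ n x

/-- Sub-additive potential: `φ (n+m) x ≤ φ n x * φ m (T^[n] x)`, i.e.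
`log φ (n+m) ≤ log φ n + log φ m ∘ T^n`. -/
def IsSubAdditivePot (T : X → X) (φ : ℕ → X → ℝ) : Prop :=
  IsPotential φ ∧ ∀ n m x, φ (n + m) x ≤ φ n x * φ m (T^[n] x)

/-- `limsup_n (1/n) sup_x |log φ n x - log ψ n x| ≤ ε`, with the convention
`log 0 - log 0 = 0` (and `|log 0 - log c| = ∞` for `c ≠ 0`). -/
def ApproxAtScale (φ ψ : ℕ → X → ℝ) (ε : ℝ) : Prop :=
  ∀ ε' > ε, ∀ᶠ n : ℕ in atTop, ∀ x : X,
    (φ n x = 0 ↔ ψ n x = 0) ∧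
    (φ n x ≠ 0 → |Real.log (φ n x) - Real.log (ψ n x)| ≤ n * ε')

/-- Asymptotically sub-additive potential. -/
def IsAsympSubAdditive (T : X → X) (φ : ℕ → X → ℝ) : Prop :=
  IsPotential φ ∧ ∀ ε > 0, ∃ ψ : ℕ → X → ℝ, IsSubAdditivePot T ψ ∧ ApproxAtScale φ ψ ε

/-- Asymptotically additive potential (via approximation by genuinely additive
potentials `ψ n x = exp (∑_{i<n} g (T^i x))`). -/
def IsAsympAdditive (T : X → X) (φ : ℕ → X → ℝ) : Prop :=
  IsPotential φ ∧ ∀ ε > 0, ∃ g : X → ℝ, Continuous g ∧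
    ApproxAtScale φ (fun n x => Real.exp (∑ i ∈ Finset.range n, g (T^[i] x))) ε

/-- `∫ log f dμ ∈ ℝ ∪ {-∞}`, as the infimum of the integrals of the truncations
`log (max f (exp (-R)))`. -/
def elogInt (μ : Measure X) (f : X → ℝ) : EReal :=
  ⨅ R : ℕ, ((∫ x, Real.log (max (f x) (Real.exp (-(R : ℝ)))) ∂μ : ℝ) : EReal)

/-- `Φ_*(μ) = lim_n (1/n) ∫ log φ n dμ` (written as a `limsup`, which equals the
limit whenever the latter exists). -/
def potStar (μ : Measure X) (φ : ℕ → X → ℝ) : EReal :=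
  limsup (fun n : ℕ => (((n : ℝ)⁻¹ : ℝ) : EReal) * elogInt μ (φ n)) atTop

/-- The sequence `(1/n) log φ n x`, whose limit (when it exists) is the Lyapunov
exponent `λ_Φ(x)`. -/
def lyapSeq (φ : ℕ → X → ℝ) (x : X) : ℕ → EReal :=
  fun n => (((n : ℝ)⁻¹ : ℝ) : EReal) * elog (φ n x)

/-- The `α`-level set `E_Φ(α) = {x : λ_Φ(x) = α}`. -/
def levelSet (φ : ℕ → X → ℝ) (α : EReal) : Set X :=
  {x | Tendsto (lyapSeq φ x) atTop (𝓝 α)}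

/-- `β̄(Φ) = limsup_n (1/n) sup_x log φ n x`. -/
def betaBar (φ : ℕ → X → ℝ) : EReal :=
  limsup (fun n : ℕ => (((n : ℝ)⁻¹ : ℝ) : EReal) * ⨆ x : X, elog (φ n x)) atTop

/-- `β̲(Φ) = limsup_n (1/n) inf_x log φ n x`. -/
def betaLow (φ : ℕ → X → ℝ) : EReal :=
  limsup (fun n : ℕ => (((n : ℝ)⁻¹ : ℝ) : EReal) * ⨅ x : X, elog (φ n x)) atTop

/-- `μ` is a `T`-invariant Borel probability measure. -/
def InvProb (T : X → X) (μ : Measure X) : Prop :=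
  IsProbabilityMeasure μ ∧ μ.map T = μ

/-- Entropy of the finite partition of `X` induced by `p`. -/
def partEnt (μ : Measure X) {S : Type} [Fintype S] (p : X → S) : ℝ :=
  ∑ s : S, Real.negMulLog (μ (p ⁻¹' {s})).toReal

/-- Measure-theoretic (Kolmogorov–Sinai) entropy `h_μ(T)`: supremum over finite
measurable partitions of `lim (1/n) H(⋁_{i<n} T^{-i} P)` (the limit is the inf). -/
def mEnt (T : X → X) (μ : Measure X) : EReal :=
  ⨆ (m : ℕ) (p : X → Fin m) (_ : Measurable p),
    ⨅ (n : ℕ) (_ : 0 < n),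
      (((n : ℝ)⁻¹ * partEnt μ (fun x (i : Fin n) => p (T^[(i : ℕ)] x)) : ℝ) : EReal)

/-- Bowen ball `B_n(x, ε)` in the metric `d_n`. -/
def dynBall (T : X → X) (x : X) (n : ℕ) (ε : ℝ) : Set X :=
  {y | ∀ k < n, dist (T^[k] x) (T^[k] y) < ε}

/-- `M(Z, s, N, ε)`: infimum of `∑ exp (-s n_i)` over countable covers of `Z` by
Bowen balls `B_{n_i}(x_i, ε)` with `n_i ≥ N`. -/
def bowenM (T : X → X) (Z : Set X) (s : ℝ) (N : ℕ) (ε : ℝ) : ℝ≥0∞ :=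
  ⨅ (c : ℕ → X × ℕ) (_ : ∀ i, N ≤ (c i).2)
    (_ : Z ⊆ ⋃ i, dynBall T (c i).1 (c i).2 ε),
    ∑' i, ENNReal.ofReal (Real.exp (-(s * ((c i).2 : ℝ))))

/-- Bowen's topological entropy of `Z` at scale `ε`: the critical value of `s` at
which `M(Z, s, ε) = lim_N M(Z, s, N, ε)` jumps from `∞` to `0`. -/
def entAt (T : X → X) (Z : Set X) (ε : ℝ) : EReal :=
  sInf {s : EReal | ∃ r : ℝ, s = (r : EReal) ∧ (⨆ N, bowenM T Z r N ε) = 0}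

/-- Bowen's topological entropy `h_top(T, Z)` of an arbitrary subset `Z ⊆ X`. -/
def entOf (T : X → X) (Z : Set X) : EReal :=
  ⨆ (ε : ℝ) (_ : 0 < ε), entAt T Z ε

/-- `(n, ε)`-separated subset of `X`. -/
def IsSep (T : X → X) (n : ℕ) (ε : ℝ) (E : Finset X) : Prop :=
  ∀ x ∈ E, ∀ y ∈ E, x ≠ y → ∃ k < n, ε < dist (T^[k] x) (T^[k] y)

/-- `P_n(T, Φ, ε) = sup { ∑_{x ∈ E} φ n x : E is (n,ε)-separated }`. -/
def sepSum (T : X → X) (φ : ℕ → X → ℝ) (n : ℕ) (ε : ℝ) : ℝ≥0∞ :=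
  ⨆ (E : Finset X) (_ : IsSep T n ε E), ∑ x ∈ E, ENNReal.ofReal (φ n x)

/-- Topological pressure `P(T, Φ) = lim_{ε→0} limsup_n (1/n) log P_n(T, Φ, ε)`. -/
def pressure (T : X → X) (φ : ℕ → X → ℝ) : EReal :=
  ⨆ (ε : ℝ) (_ : 0 < ε),
    limsup (fun n : ℕ => (((n : ℝ)⁻¹ : ℝ) : EReal) * elogENN (sepSum T φ n ε)) atTop

/-- The potential `q · Φ = {∑ i, q i * log (φ i) n}`, i.e. `∏ i, (φ i n) ^ (q i)`. -/
def weightedPot {k : ℕ} (φ : Fin k → ℕ → X → ℝ) (q : Fin k → ℝ) : ℕ → X → ℝ :=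
  fun n x => ∏ i, (φ i n x) ^ (q i)

/-- The potential `Φ₁ + ⋯ + Φ_k`, i.e. `∏ i, φ i n`. -/
def sumPot {k : ℕ} (φ : Fin k → ℕ → X → ℝ) : ℕ → X → ℝ :=
  fun n x => ∏ i, φ i n x

end

/-- Dot product on `Fin k → ℝ`. -/
def dotp {k : ℕ} (a b : Fin k → ℝ) : ℝ := ∑ i, a i * b i

/-- The open positive orthant `ℝ_+^k`. -/
def posOrth (k : ℕ) : Set (Fin k → ℝ) := {q | ∀ i, 0 < q i}

/-- `a` is a subgradient of `F` at `q` relative to `U`. -/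
def IsSubgrad {k : ℕ} (U : Set (Fin k → ℝ)) (F : (Fin k → ℝ) → ℝ) (q a : Fin k → ℝ) : Prop :=
  ∀ t ∈ U, dotp a (t - q) ≤ F t - F q

-- ===== auxiliary development =====
set_option maxHeartbeats 1000000
set_option linter.unusedSectionVars false
namespace S14
open Filter

lemma elog_ne_top (r : ℝ) : elog r ≠ ⊤ := by
  unfold elog; split <;> simp

lemma elog_mono {r s : ℝ} (hr : 0 ≤ r) (h : r ≤ s) : elog r ≤ elog s := by
  unfold elog
  rcases eq_or_lt_of_le hr with h0 | h0
  · simp [← h0]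
  · rw [if_neg h0.ne', if_neg (h0.trans_le h).ne']
    exact_mod_cast Real.log_le_log h0 h

lemma elog_exp (t : ℝ) : elog (Real.exp t) = (t : EReal) := by
  rw [elog, if_neg (Real.exp_ne_zero t), Real.log_exp]

lemma elog_le_coe_iff {r c : ℝ} (hr : 0 ≤ r) : elog r ≤ (c : EReal) ↔ r ≤ Real.exp c := by
  rcases eq_or_lt_of_le hr with h0 | h0
  · simp [elog, ← h0, bot_le, (Real.exp_pos c).le]
  · rw [elog, if_neg h0.ne']
    rw [EReal.coe_le_coe_iff, Real.log_le_iff_le_exp h0]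

lemma coe_le_elog_iff {r c : ℝ} (hr0 : 0 ≤ r) : (c : EReal) ≤ elog r ↔ Real.exp c ≤ r := by
  rcases eq_or_lt_of_le hr0 with h0 | h0
  · simp [elog, ← h0, (Real.exp_pos c).not_ge]
  · rw [elog, if_neg h0.ne', EReal.coe_le_coe_iff, Real.le_log_iff_exp_le h0]

lemma elog_mul {a b : ℝ} (ha : 0 ≤ a) (hb : 0 ≤ b) : elog (a * b) = elog a + elog b := by
  rcases eq_or_lt_of_le ha with h0 | h0
  · simp [elog, ← h0]
  rcases eq_or_lt_of_le hb with h1 | h1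
  · simp [elog, ← h1]
  rw [elog, elog, elog, if_neg h0.ne', if_neg h1.ne', if_neg (mul_pos h0 h1).ne',
    Real.log_mul h0.ne' h1.ne']
  exact_mod_cast rfl

lemma elog_rpow {a p : ℝ} (ha : 0 ≤ a) (hp : 0 < p) : elog (a ^ p) = (p : EReal) * elog a := by
  rcases eq_or_lt_of_le ha with h0 | h0
  · rw [← h0, Real.zero_rpow hp.ne']
    rw [show elog 0 = (⊥ : EReal) from if_pos rfl, EReal.coe_mul_bot_of_pos hp]
  · rw [elog, elog, if_neg h0.ne', if_neg (Real.rpow_pos_of_pos h0 p).ne',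
      Real.log_rpow h0]
    exact_mod_cast rfl

lemma elog_prod {ι : Type*} (s : Finset ι) (f : ι → ℝ) (hf : ∀ i ∈ s, 0 ≤ f i) :
    elog (∏ i ∈ s, f i) = ∑ i ∈ s, elog (f i) := by
  induction s using Finset.cons_induction with
  | empty => simp [elog]
  | cons i s his ih =>
    rw [Finset.prod_cons, Finset.sum_cons,
      elog_mul (hf i (Finset.mem_cons_self i s)) (Finset.prod_nonneg fun j hj => hf j (Finset.mem_cons_of_mem hj)),
      ih (fun j hj => hf j (Finset.mem_cons_of_mem hj))]

lemma elogENN_le_log {S : ℝ≥0∞} {R : ℝ} (hR : 0 < R) (h : S ≤ ENNReal.ofReal R) :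
    elogENN S ≤ (Real.log R : EReal) := by
  rcases eq_or_ne S 0 with h0 | h0
  · simp [elogENN, h0]
  have hst : S ≠ ⊤ := ne_top_of_le_ne_top ENNReal.ofReal_ne_top h
  rw [elogENN, if_neg h0, if_neg hst, EReal.coe_le_coe_iff]
  exact Real.log_le_log (ENNReal.toReal_pos h0 hst) (ENNReal.toReal_le_of_le_ofReal hR.le h)

lemma log_le_elogENN {S : ℝ≥0∞} {R : ℝ} (hR : 0 < R) (h : ENNReal.ofReal R ≤ S) :
    (Real.log R : EReal) ≤ elogENN S := by
  rcases eq_or_ne S ⊤ with ht | ht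
  · rw [ht]; simp [elogENN]
  have h0 : S ≠ 0 := by
    intro hS; rw [hS, nonpos_iff_eq_zero] at h
    exact absurd ((ENNReal.ofReal_eq_zero).1 h) (by linarith)
  rw [elogENN, if_neg h0, if_neg ht, EReal.coe_le_coe_iff]
  exact Real.log_le_log hR ((ENNReal.ofReal_le_iff_le_toReal ht).1 h)

lemma le_coe_of_forall_add {x : EReal} {y : ℝ} (h : ∀ δ : ℝ, 0 < δ → x ≤ ((y + δ : ℝ) : EReal)) :
    x ≤ (y : EReal) := by
  induction x using EReal.rec with
  | bot => exact bot_le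
  | coe z =>
    rw [EReal.coe_le_coe_iff]
    refine le_of_forall_pos_le_add fun δ hδ => ?_
    exact_mod_cast h δ hδ
  | top => simpa using (h 1 one_pos).trans_lt (EReal.coe_lt_top _)

lemma exists_coe_lt {x : EReal} (hx : x ≠ ⊥) : ∃ r : ℝ, (r : EReal) < x := by
  induction x using EReal.rec with
  | bot => exact absurd rfl hx
  | coe z => exact ⟨z - 1, by exact_mod_cast sub_one_lt z⟩
  | top => exact ⟨0, EReal.coe_lt_top 0⟩

lemma inv_mul_le_coe {n : ℕ} (hn : 1 ≤ n) {x : EReal} {R : ℝ} (h : x ≤ (R : EReal)) :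
    (((n : ℝ)⁻¹ : ℝ) : EReal) * x ≤ (((n : ℝ)⁻¹ * R : ℝ) : EReal) := by
  have hpos : (0 : ℝ) < (n : ℝ)⁻¹ := by positivity
  induction x using EReal.rec with
  | bot => rw [EReal.coe_mul_bot_of_pos hpos]; exact bot_le
  | coe z =>
    rw [← EReal.coe_mul, EReal.coe_le_coe_iff]
    exact mul_le_mul_of_nonneg_left (by exact_mod_cast h) hpos.le
  | top => simp at h
    
lemma coe_le_inv_mul {n : ℕ} (hn : 1 ≤ n) {x : EReal} {R : ℝ} (h : (R : EReal) ≤ x) :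
    (((n : ℝ)⁻¹ * R : ℝ) : EReal) ≤ (((n : ℝ)⁻¹ : ℝ) : EReal) * x := by
  have hpos : (0 : ℝ) < (n : ℝ)⁻¹ := by positivity
  induction x using EReal.rec with
  | bot => simp at h
  | coe z =>
    rw [← EReal.coe_mul, EReal.coe_le_coe_iff]
    exact mul_le_mul_of_nonneg_left (by exact_mod_cast h) hpos.le
  | top =>
    rw [EReal.mul_top_of_pos (by exact_mod_cast hpos)]
    exact le_top

section Dyn
variable {X : Type*} [MetricSpace X] [CompactSpace X] [MeasurableSpace X] [BorelSpace X] [Nonempty X]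

lemma isOpen_dynBall (T : X → X) (hT : Continuous T) (x : X) (n : ℕ) (ε : ℝ) :
    IsOpen (dynBall T x n ε) := by
  have : dynBall T x n ε = ⋂ k ∈ Finset.range n, (T^[k]) ⁻¹' Metric.ball (T^[k] x) ε := by
    ext y
    simp [dynBall, Metric.mem_ball, dist_comm]
  rw [this]
  exact isOpen_biInter_finset fun k _ => Metric.isOpen_ball.preimage (hT.iterate k)

lemma self_mem_dynBall (T : X → X) (x : X) (n : ℕ) {ε : ℝ} (hε : 0 < ε) :
    x ∈ dynBall T x n ε := fun k _ => by simpa using hε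

/-- cardinality of separated sets is bounded -/
lemma sep_card_bound (T : X → X) (hT : Continuous T) (n : ℕ) {ε : ℝ} (hε : 0 < ε) :
    ∃ K : ℕ, ∀ E : Finset X, IsSep T n ε E → E.card ≤ K := by
  obtain ⟨t, ht⟩ := isCompact_univ.elim_finite_subcover
    (fun x : X => dynBall T x n (ε / 2)) (fun x => isOpen_dynBall T hT x n (ε / 2))
    (fun x _ => mem_iUnion.2 ⟨x, self_mem_dynBall T x n (by linarith)⟩)
  refine ⟨t.card, fun E hE => ?_⟩
  have hex : ∀ x : X, ∃ i ∈ t, x ∈ dynBall T i n (ε / 2) := fun x => by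
    simpa using ht (mem_univ x)
  choose g hg1 hg2 using hex
  refine Finset.card_le_card_of_injOn g (fun x _ => hg1 x) ?_
  intro x hx y hy hxy
  by_contra hne
  obtain ⟨k, hk, hd⟩ := hE x (Finset.mem_coe.1 hx) y (Finset.mem_coe.1 hy) hne
  have h1 := hg2 x k hk
  have h2 := hg2 y k hk
  rw [hxy] at h1
  have := dist_triangle (T^[k] x) (T^[k] (g y)) (T^[k] y)
  rw [dist_comm (T^[k] x) (T^[k] (g y))] at this
  linarith

/-- maximal cardinality of an `(n,ε)`-separated set -/
noncomputable def sepc (T : X → X) (n : ℕ) (ε : ℝ) : ℕ :=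
  sSup {m | ∃ E : Finset X, IsSep T n ε E ∧ E.card = m}

lemma card_le_sepc {T : X → X} (hT : Continuous T) {n : ℕ} {ε : ℝ} (hε : 0 < ε)
    {E : Finset X} (hE : IsSep T n ε E) : E.card ≤ sepc T n ε := by
  obtain ⟨K, hK⟩ := sep_card_bound T hT n hε
  exact le_csSup ⟨K, fun m ⟨E', hE', hc⟩ => hc ▸ hK E' hE'⟩ ⟨E, hE, rfl⟩

lemma sepc_le {T : X → X} {n : ℕ} {ε : ℝ} {m : ℕ}
    (h : ∀ E : Finset X, IsSep T n ε E → E.card ≤ m) : sepc T n ε ≤ m := by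
  refine csSup_le ⟨0, ∅, fun x hx => absurd hx (by simp), Finset.card_empty⟩ ?_
  rintro l ⟨E, hE, rfl⟩
  exact h E hE

lemma isSep_singleton (T : X → X) (n : ℕ) (ε : ℝ) (x : X) : IsSep T n ε {x} := by
  intro a ha b hb hab
  rw [Finset.mem_singleton] at ha hb
  exact absurd (ha.trans hb.symm) hab

lemma isSep_empty (T : X → X) (n : ℕ) (ε : ℝ) : IsSep T n ε ∅ :=
  fun x hx => absurd hx (by simp)

lemma one_le_sepc (T : X → X) (hT : Continuous T) (n : ℕ) {ε : ℝ} (hε : 0 < ε) :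
    1 ≤ sepc T n ε := by
  have := card_le_sepc hT hε (isSep_singleton T n ε (Classical.arbitrary X))
  simpa using this

lemma isSep_mono {T : X → X} {n m : ℕ} {ε : ℝ} (hnm : n ≤ m) {E : Finset X}
    (h : IsSep T n ε E) : IsSep T m ε E := by
  intro x hx y hy hxy
  obtain ⟨k, hk, hd⟩ := h x hx y hy hxy
  exact ⟨k, lt_of_lt_of_le hk hnm, hd⟩

lemma sepc_mono {T : X → X} (hT : Continuous T) {n m : ℕ} {ε : ℝ} (hε : 0 < ε) (hnm : n ≤ m) :
    sepc T n ε ≤ sepc T m ε :=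
  sepc_le fun E hE => card_le_sepc hT hε (isSep_mono hnm hE)

/-- if two points lie in a common Bowen ball of length `m` and radius `ε`, any
`2ε`-separation time is `≥ m`. -/
lemma sep_time_ge {T : X → X} {z x y : X} {m k : ℕ} {ε : ℝ}
    (hx : x ∈ dynBall T z m ε) (hy : y ∈ dynBall T z m ε)
    (hd : 2 * ε < dist (T^[k] x) (T^[k] y)) : m ≤ k := by
  by_contra hlt
  push_neg at hlt
  have h1 := hx k hlt
  have h2 := hy k hlt
  have := dist_triangle (T^[k] x) (T^[k] z) (T^[k] y)
  rw [dist_comm (T^[k] x) (T^[k] z)] at this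
  linarith

lemma sep_split {T : X → X} (hT : Continuous T) {ε : ℝ} (hε : 0 < ε) {n : ℕ}
    (t : Finset ℕ) (c : ℕ → X × ℕ) (hlt : ∀ i ∈ t, (c i).2 < n)
    (hcov : Set.univ ⊆ ⋃ i ∈ t, dynBall T (c i).1 (c i).2 ε)
    {E : Finset X} (hE : IsSep T n (2 * ε) E) :
    E.card ≤ ∑ i ∈ t, sepc T (n - (c i).2) (2 * ε) := by
  classical
  have hex : ∀ x : X, ∃ i ∈ t, x ∈ dynBall T (c i).1 (c i).2 ε := fun x => by
    simpa using hcov (mem_univ x)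
  choose g hg1 hg2 using hex
  rw [Finset.card_eq_sum_card_fiberwise (f := g) (t := t) (fun x _ => hg1 x)]
  refine Finset.sum_le_sum fun i hi => ?_
  set m := (c i).2 with hm
  set Ei := E.filter (fun x => g x = i) with hEi
  have hball : ∀ x ∈ Ei, x ∈ dynBall T (c i).1 m ε := by
    intro x hx
    rw [hEi, Finset.mem_filter] at hx
    have := hg2 x
    rwa [hx.2] at this
  have hmem : ∀ x ∈ Ei, x ∈ E := fun x hx => (Finset.mem_filter.1 hx).1
  have hwit : ∀ x ∈ Ei, ∀ y ∈ Ei, x ≠ y →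
      ∃ k, m ≤ k ∧ k < n ∧ 2 * ε < dist (T^[k] x) (T^[k] y) := by
    intro x hx y hy hxy
    obtain ⟨k, hk, hd⟩ := hE x (hmem x hx) y (hmem y hy) hxy
    exact ⟨k, sep_time_ge (hball x hx) (hball y hy) hd, hk, hd⟩
  have hinj : Set.InjOn (T^[m]) Ei := by
    intro x hx y hy hxy
    by_contra hne
    obtain ⟨k, hmk, hkn, hd⟩ := hwit x (Finset.mem_coe.1 hx) y (Finset.mem_coe.1 hy) hne
    have : T^[k] x = T^[k] y := by
      have hx' : T^[k] x = T^[k - m] (T^[m] x) := by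
        rw [← Function.iterate_add_apply, Nat.sub_add_cancel hmk]
      have hy' : T^[k] y = T^[k - m] (T^[m] y) := by
        rw [← Function.iterate_add_apply, Nat.sub_add_cancel hmk]
      rw [hx', hy', hxy]
    rw [this] at hd
    simp at hd
    linarith
  have himg : IsSep T (n - m) (2 * ε) (Ei.image (T^[m])) := by
    intro a ha b hb hab
    obtain ⟨x, hx, rfl⟩ := Finset.mem_image.1 ha
    obtain ⟨y, hy, rfl⟩ := Finset.mem_image.1 hb
    have hne : x ≠ y := fun h => hab (by rw [h])
    obtain ⟨k, hmk, hkn, hd⟩ := hwit x hx y hy hne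
    refine ⟨k - m, by omega, ?_⟩
    rw [← Function.iterate_add_apply, ← Function.iterate_add_apply, Nat.sub_add_cancel hmk]
    exact hd
  calc Ei.card = (Ei.image (T^[m])).card := (Finset.card_image_of_injOn hinj).symm
    _ ≤ sepc T (n - m) (2 * ε) := card_le_sepc hT (by linarith) himg

end Dyn

section Growth
variable {X : Type*} [MetricSpace X] [CompactSpace X] [MeasurableSpace X] [BorelSpace X] [Nonempty X]

lemma bowenM_anti (T : X → X) (Z : Set X) {r r' : ℝ} (h : r ≤ r') (N : ℕ) (ε : ℝ) :
    bowenM T Z r' N ε ≤ bowenM T Z r N ε := by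
  unfold bowenM
  refine iInf_mono fun c => iInf_mono fun hc => iInf_mono fun hcov => ?_
  refine ENNReal.tsum_le_tsum fun i => ENNReal.ofReal_le_ofReal ?_
  refine Real.exp_le_exp.2 ?_
  have : (0 : ℝ) ≤ ((c i).2 : ℝ) := Nat.cast_nonneg _
  nlinarith

lemma sepc_growth (T : X → X) (hT : Continuous T) {ε : ℝ} (hε : 0 < ε) {s : ℝ} (hs : 0 ≤ s)
    (h0 : bowenM T Set.univ s 1 ε = 0) :
    ∃ C : ℝ, 1 ≤ C ∧ ∀ n : ℕ, (sepc T n (2 * ε) : ℝ) ≤ C * Real.exp (s * n) := by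
  have h2ε : (0:ℝ) < 2 * ε := by linarith
  have h1 : bowenM T Set.univ s 1 ε < 1 := by rw [h0]; exact zero_lt_one
  unfold bowenM at h1
  rw [iInf_lt_iff] at h1
  obtain ⟨c, h1⟩ := h1
  rw [iInf_lt_iff] at h1
  obtain ⟨hN, h1⟩ := h1
  rw [iInf_lt_iff] at h1
  obtain ⟨hcov, hsum⟩ := h1
  obtain ⟨t, ht⟩ := isCompact_univ.elim_finite_subcover
    (fun i => dynBall T (c i).1 (c i).2 ε) (fun i => isOpen_dynBall T hT _ _ _) hcov
  set M₀ := t.sup (fun i => (c i).2) with hM₀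
  have hγ : ∑ i ∈ t, Real.exp (-(s * ((c i).2 : ℝ))) < 1 := by
    have hle : ∑ i ∈ t, ENNReal.ofReal (Real.exp (-(s * ((c i).2 : ℝ)))) ≤
        ∑' i, ENNReal.ofReal (Real.exp (-(s * ((c i).2 : ℝ)))) := ENNReal.sum_le_tsum t
    rw [← ENNReal.ofReal_sum_of_nonneg (fun i _ => (Real.exp_pos _).le)] at hle
    exact ENNReal.ofReal_lt_one.1 (lt_of_le_of_lt hle hsum)
  set C : ℝ := (sepc T M₀ (2 * ε) : ℝ) + 1 with hC
  have hC1 : (1:ℝ) ≤ C := by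
    have : (0:ℝ) ≤ (sepc T M₀ (2 * ε) : ℝ) := Nat.cast_nonneg _
    linarith
  refine ⟨C, hC1, ?_⟩
  intro n
  induction n using Nat.strong_induction_on with
  | _ n IH =>
  have hexp1 : (1:ℝ) ≤ Real.exp (s * n) := Real.one_le_exp (by positivity)
  rcases le_or_gt n M₀ with hn | hn
  · have : (sepc T n (2 * ε) : ℝ) ≤ (sepc T M₀ (2 * ε) : ℝ) := by
      exact_mod_cast sepc_mono hT h2ε hn
    nlinarith
  · have hlt : ∀ i ∈ t, (c i).2 < n := fun i hi =>
      lt_of_le_of_lt (Finset.le_sup (f := fun i => (c i).2) hi) hn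
    have hsplit : sepc T n (2 * ε) ≤ ∑ i ∈ t, sepc T (n - (c i).2) (2 * ε) :=
      sepc_le fun E hE => sep_split hT hε t c hlt ht hE
    have hcast : (sepc T n (2 * ε) : ℝ) ≤ ∑ i ∈ t, (sepc T (n - (c i).2) (2 * ε) : ℝ) := by
      exact_mod_cast hsplit
    have hstep : ∀ i ∈ t, (sepc T (n - (c i).2) (2 * ε) : ℝ) ≤
        C * Real.exp (s * n) * Real.exp (-(s * ((c i).2 : ℝ))) := by
      intro i hi
      have hi1 : 1 ≤ (c i).2 := hN i
      have hsub : n - (c i).2 < n := by omega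
      have := IH _ hsub
      have hcastn : ((n - (c i).2 : ℕ) : ℝ) = (n : ℝ) - ((c i).2 : ℝ) := by
        rw [Nat.cast_sub (le_of_lt (hlt i hi))]
      rw [hcastn] at this
      calc (sepc T (n - (c i).2) (2 * ε) : ℝ)
          ≤ C * Real.exp (s * ((n:ℝ) - ((c i).2 : ℝ))) := this
        _ = C * Real.exp (s * n) * Real.exp (-(s * ((c i).2 : ℝ))) := by
            rw [mul_assoc, ← Real.exp_add]; ring_nf
    calc (sepc T n (2 * ε) : ℝ) ≤ ∑ i ∈ t, (sepc T (n - (c i).2) (2 * ε) : ℝ) := hcast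
      _ ≤ ∑ i ∈ t, C * Real.exp (s * n) * Real.exp (-(s * ((c i).2 : ℝ))) :=
          Finset.sum_le_sum hstep
      _ = C * Real.exp (s * n) * ∑ i ∈ t, Real.exp (-(s * ((c i).2 : ℝ))) := by
          rw [Finset.mul_sum]
      _ ≤ C * Real.exp (s * n) * 1 := by
          refine mul_le_mul_of_nonneg_left hγ.le (by positivity)
      _ = C * Real.exp (s * n) := mul_one _

/-- uniform exponential bound on separated-set cardinalities from finite topological entropy -/
lemma sepc_exp_bound (T : X → X) (hT : Continuous T) (htop : entOf T Set.univ ≠ ⊤) :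
    ∃ b : ℝ, 0 ≤ b ∧ ∀ ε : ℝ, 0 < ε → ∃ C : ℝ, 1 ≤ C ∧
      ∀ n : ℕ, (sepc T n ε : ℝ) ≤ C * Real.exp (b * n) := by
  set b : ℝ := (max (entOf T Set.univ) 0).toReal + 1 with hb
  have hmaxne : max (entOf T Set.univ) 0 ≠ ⊤ := by
    simp only [ne_eq, max_eq_top]
    push_neg
    exact ⟨htop, by simp⟩
  have hmaxnb : max (entOf T Set.univ) 0 ≠ ⊥ := by
    refine ne_bot_of_le_ne_bot ?_ (le_max_right _ _)
    simp
  have hb0 : 0 ≤ b := by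
    have : (0:EReal) ≤ max (entOf T Set.univ) 0 := le_max_right _ _
    have h0 : (0:ℝ) ≤ (max (entOf T Set.univ) 0).toReal := by
      rw [← EReal.toReal_zero]
      exact EReal.toReal_le_toReal this (by simp) hmaxne
    linarith
  refine ⟨b, hb0, ?_⟩
  intro ε hε
  have hε2 : 0 < ε / 2 := by linarith
  -- entAt at scale ε/2 is < b
  have hentle : entAt T Set.univ (ε / 2) < (b : EReal) := by
    have h1 : entAt T Set.univ (ε / 2) ≤ entOf T Set.univ := by
      unfold entOf
      exact le_iSup₂ (f := fun ε _ => entAt T Set.univ ε) (ε / 2) hε2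
    have h2 : entOf T Set.univ ≤ max (entOf T Set.univ) 0 := le_max_left _ _
    have h3 : max (entOf T Set.univ) 0 = ((max (entOf T Set.univ) 0).toReal : EReal) :=
      (EReal.coe_toReal hmaxne hmaxnb).symm
    calc entAt T Set.univ (ε / 2) ≤ max (entOf T Set.univ) 0 := h1.trans h2
      _ = (((max (entOf T Set.univ) 0).toReal : ℝ) : EReal) := h3
      _ < (b : EReal) := by rw [hb]; exact_mod_cast lt_add_one _
  obtain ⟨z, hz, hzb⟩ := sInf_lt_iff.1 hentle
  obtain ⟨r, rfl, hr0⟩ := hz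
  have hrb : r < b := by exact_mod_cast hzb
  set s : ℝ := max r 0 with hs
  have hs0 : 0 ≤ s := le_max_right _ _
  have hsb : s ≤ b := max_le hrb.le hb0
  have hs0' : (⨆ N, bowenM T Set.univ s N (ε / 2)) = 0 := by
    rw [← le_zero_iff, ← hr0]
    exact iSup_mono fun N => bowenM_anti T Set.univ (le_max_left r 0) N (ε / 2)
  have h00 : bowenM T Set.univ s 1 (ε / 2) = 0 := by
    have := le_iSup (fun N => bowenM T Set.univ s N (ε / 2)) 1
    rw [hs0'] at this
    exact le_antisymm this zero_le
  obtain ⟨C, hC1, hCb⟩ := sepc_growth T hT hε2 hs0 h00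
  refine ⟨C, hC1, fun n => ?_⟩
  have h2 : 2 * (ε / 2) = ε := by ring
  have := hCb n
  rw [h2] at this
  calc (sepc T n ε : ℝ) ≤ C * Real.exp (s * n) := this
    _ ≤ C * Real.exp (b * n) := by
        refine mul_le_mul_of_nonneg_left (Real.exp_le_exp.2 ?_) (by linarith)
        exact mul_le_mul_of_nonneg_right hsb (Nat.cast_nonneg n)

end Growth

section Pot
variable {X : Type*} [MetricSpace X] [CompactSpace X] [MeasurableSpace X] [BorelSpace X] [Nonempty X]

lemma sepSum_ge (T : X → X) (ψ : ℕ → X → ℝ) (n : ℕ) (ε : ℝ) (x : X) :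
    ENNReal.ofReal (ψ n x) ≤ sepSum T ψ n ε := by
  have h := le_iSup₂ (f := fun (E : Finset X) (_ : IsSep T n ε E) =>
    ∑ y ∈ E, ENNReal.ofReal (ψ n y)) ({x} : Finset X) (isSep_singleton T n ε x)
  simpa [sepSum] using h

lemma sepSum_le {T : X → X} (hT : Continuous T) (ψ : ℕ → X → ℝ) (n : ℕ) {ε : ℝ} (hε : 0 < ε)
    {M : ℝ} (hM : ∀ x, ψ n x ≤ M) :
    sepSum T ψ n ε ≤ (sepc T n ε : ℝ≥0∞) * ENNReal.ofReal M := by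
  refine iSup₂_le fun E hE => ?_
  calc ∑ x ∈ E, ENNReal.ofReal (ψ n x) ≤ ∑ x ∈ E, ENNReal.ofReal M :=
        Finset.sum_le_sum fun x _ => ENNReal.ofReal_le_ofReal (hM x)
    _ = (E.card : ℝ≥0∞) * ENNReal.ofReal M := by rw [Finset.sum_const, nsmul_eq_mul]
    _ ≤ (sepc T n ε : ℝ≥0∞) * ENNReal.ofReal M := by
        exact mul_le_mul_left (by exact_mod_cast Nat.cast_le.2 (card_le_sepc hT hε hE)) _

lemma sepSum_ne_top {T : X → X} (hT : Continuous T) {ψ : ℕ → X → ℝ} {n : ℕ} {ε : ℝ}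
    (hε : 0 < ε) (hcont : Continuous (ψ n)) : sepSum T ψ n ε ≠ ⊤ := by
  obtain ⟨z, _, hz⟩ := isCompact_univ.exists_isMaxOn univ_nonempty hcont.continuousOn
  refine ne_top_of_le_ne_top ?_ (sepSum_le hT ψ n hε (fun x => hz (mem_univ x)))
  exact ENNReal.mul_ne_top (ENNReal.natCast_ne_top _) ENNReal.ofReal_ne_top

lemma sepSum_holder (T : X → X) {f g : ℕ → X → ℝ} (n : ℕ) (ε : ℝ)
    (hf : ∀ x, 0 ≤ f n x) (hg : ∀ x, 0 ≤ g n x)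
    {θa θb : ℝ} (ha : 0 < θa) (hb : 0 < θb) (hab : θa + θb = 1) :
    sepSum T (fun n x => f n x ^ θa * g n x ^ θb) n ε ≤
      (sepSum T f n ε) ^ θa * (sepSum T g n ε) ^ θb := by
  have hb1 : θa < 1 := by linarith
  have hpq : (1/θa).HolderConjugate (1/θb) := by
    constructor
    · rw [one_div, one_div, inv_inv, inv_inv, inv_one]; exact hab
    · positivity
    · positivity
  refine iSup₂_le fun E hE => ?_
  have h1 : ∀ x : X, ENNReal.ofReal (f n x ^ θa * g n x ^ θb) =
      (ENNReal.ofReal (f n x)) ^ θa * (ENNReal.ofReal (g n x)) ^ θb := fun x => by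
    rw [ENNReal.ofReal_mul (Real.rpow_nonneg (hf x) _),
      ENNReal.ofReal_rpow_of_nonneg (hf x) ha.le, ENNReal.ofReal_rpow_of_nonneg (hg x) hb.le]
  have key : ∑ x ∈ E, ENNReal.ofReal (f n x ^ θa * g n x ^ θb)
      ≤ (∑ x ∈ E, ENNReal.ofReal (f n x)) ^ θa * (∑ x ∈ E, ENNReal.ofReal (g n x)) ^ θb := by
    have h2 := ENNReal.inner_le_Lp_mul_Lq E (fun x => (ENNReal.ofReal (f n x)) ^ θa)
      (fun x => (ENNReal.ofReal (g n x)) ^ θb) hpq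
    have hfp : ∀ x : X, ((ENNReal.ofReal (f n x)) ^ θa) ^ (1/θa) = ENNReal.ofReal (f n x) := by
      intro x
      rw [← ENNReal.rpow_mul, mul_one_div_cancel ha.ne', ENNReal.rpow_one]
    have hgp : ∀ x : X, ((ENNReal.ofReal (g n x)) ^ θb) ^ (1/θb) = ENNReal.ofReal (g n x) := by
      intro x
      rw [← ENNReal.rpow_mul, mul_one_div_cancel hb.ne', ENNReal.rpow_one]
    simp only [hfp, hgp, one_div_one_div] at h2
    calc ∑ x ∈ E, ENNReal.ofReal (f n x ^ θa * g n x ^ θb)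
        = ∑ x ∈ E, (ENNReal.ofReal (f n x)) ^ θa * (ENNReal.ofReal (g n x)) ^ θb := by
          exact Finset.sum_congr rfl fun x _ => h1 x
      _ ≤ _ := h2
  refine key.trans (mul_le_mul' ?_ ?_)
  · exact ENNReal.rpow_le_rpow (le_iSup₂ (f := fun (E : Finset X) (_ : IsSep T n ε E) =>
      ∑ y ∈ E, ENNReal.ofReal (f n y)) E hE) ha.le
  · exact ENNReal.rpow_le_rpow (le_iSup₂ (f := fun (E : Finset X) (_ : IsSep T n ε E) =>
      ∑ y ∈ E, ENNReal.ofReal (g n y)) E hE) hb.le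

variable {k : ℕ}

lemma weightedPot_nonneg (φ : Fin k → ℕ → X → ℝ) (hφ0 : ∀ i n x, 0 ≤ φ i n x)
    (q : Fin k → ℝ) (n : ℕ) (x : X) : 0 ≤ weightedPot φ q n x :=
  Finset.prod_nonneg fun i _ => Real.rpow_nonneg (hφ0 i n x) _

lemma weightedPot_continuous (φ : Fin k → ℕ → X → ℝ) (hc : ∀ i (n : ℕ), Continuous (φ i n))
    {q : Fin k → ℝ} (hq : ∀ i, 0 < q i) (n : ℕ) : Continuous (weightedPot φ q n) := by
  refine continuous_finset_prod _ fun i _ => ?_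
  refine continuous_iff_continuousAt.2 fun x => ?_
  exact (Real.continuousAt_rpow_const (φ i n x) (q i) (Or.inr (hq i).le)).comp
    (hc i n).continuousAt

lemma weightedPot_comb (φ : Fin k → ℕ → X → ℝ) (hφ0 : ∀ i n x, 0 ≤ φ i n x)
    {q q' : Fin k → ℝ} (hq : ∀ i, 0 ≤ q i) (hq' : ∀ i, 0 ≤ q' i)
    {θa θb : ℝ} (ha : 0 ≤ θa) (hb : 0 ≤ θb) (n : ℕ) (x : X) :
    weightedPot φ (θa • q + θb • q') n x =
      weightedPot φ q n x ^ θa * weightedPot φ q' n x ^ θb := by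
  unfold weightedPot
  rw [← Real.finset_prod_rpow _ _ (fun i _ => Real.rpow_nonneg (hφ0 i n x) _) θa,
    ← Real.finset_prod_rpow _ _ (fun i _ => Real.rpow_nonneg (hφ0 i n x) _) θb,
    ← Finset.prod_mul_distrib]
  refine Finset.prod_congr rfl fun i _ => ?_
  rw [← Real.rpow_mul (hφ0 i n x), ← Real.rpow_mul (hφ0 i n x),
    ← Real.rpow_add_of_nonneg (hφ0 i n x) (mul_nonneg (hq i) ha) (mul_nonneg (hq' i) hb)]
  congr 1
  simp [Pi.add_apply, Pi.smul_apply, smul_eq_mul]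
  ring

lemma weightedPot_add_single (φ : Fin k → ℕ → X → ℝ) (hφ0 : ∀ i n x, 0 ≤ φ i n x)
    {q : Fin k → ℝ} (hq : ∀ i, 0 ≤ q i) (i : Fin k) (n : ℕ) (x : X) :
    weightedPot φ (q + Pi.single i 1) n x = weightedPot φ q n x * φ i n x := by
  classical
  unfold weightedPot
  have hstep : ∀ j : Fin k, φ j n x ^ ((q + (Pi.single i 1 : Fin k → ℝ)) j) =
      φ j n x ^ ((q j : ℝ)) * φ j n x ^ ((Pi.single i 1 : Fin k → ℝ) j) := by
    intro j
    have hsingle : (0:ℝ) ≤ (Pi.single i 1 : Fin k → ℝ) j := by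
      rcases eq_or_ne j i with rfl | hne
      · simp
      · rw [Pi.single_eq_of_ne hne]
    rw [Pi.add_apply, Real.rpow_add_of_nonneg (hφ0 j n x) (hq j) hsingle]
  rw [Finset.prod_congr rfl fun j _ => hstep j, Finset.prod_mul_distrib]
  congr 1
  rw [Finset.prod_eq_single i (fun j _ hj => by rw [Pi.single_eq_of_ne hj, Real.rpow_zero])
    (fun h => absurd (Finset.mem_univ i) h)]
  rw [Pi.single_eq_same, Real.rpow_one]

lemma iSup_elog_eq {f : X → ℝ} (hf : ∀ y, 0 ≤ f y) {x₀ : X} (hmax : ∀ y, f y ≤ f x₀) :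
    (⨆ x : X, elog (f x)) = elog (f x₀) :=
  le_antisymm (iSup_le fun y => elog_mono (hf y) (hmax y)) (le_iSup (fun x => elog (f x)) x₀)

/-- eventual exponential upper bound for an asymptotically sub-additive potential -/
lemma pot_upper (T : X → X) {φ0 : ℕ → X → ℝ} (hφi : IsAsympSubAdditive T φ0) :
    ∃ c : ℝ, 0 ≤ c ∧ ∀ᶠ n : ℕ in atTop, ∀ x, φ0 n x ≤ Real.exp (c * n) := by
  obtain ⟨hpot, happrox⟩ := hφi
  obtain ⟨ψ, hψ, happ⟩ := happrox 1 one_pos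
  obtain ⟨z, _, hz⟩ := isCompact_univ.exists_isMaxOn univ_nonempty ((hψ.1 1).1).continuousOn
  set M : ℝ := max (ψ 1 z) 1 with hMdef
  have hM1 : (1:ℝ) ≤ M := le_max_right _ _
  have hψle : ∀ x, ψ 1 x ≤ M := fun x => le_trans (hz (mem_univ x)) (le_max_left _ _)
  have hψn : ∀ (n : ℕ) (x : X), ψ (n+1) x ≤ M ^ (n+1) := by
    intro n
    induction n with
    | zero => intro x; simpa using hψle x
    | succ m ih =>
      intro x
      have h1 : ψ (m+2) x ≤ ψ 1 x * ψ (m+1) (T^[1] x) := by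
        have := hψ.2 1 (m+1) x
        simpa [show 1 + (m+1) = m+2 by ring] using this
      calc ψ (m+2) x ≤ ψ 1 x * ψ (m+1) (T^[1] x) := h1
        _ ≤ M * M^(m+1) := by
            refine mul_le_mul (hψle x) (ih _) ((hψ.1 (m+1)).2 _) (by linarith)
        _ = M^(m+2) := by ring
  have hlogM : 0 ≤ Real.log M := Real.log_nonneg hM1
  refine ⟨Real.log M + 2, by linarith, ?_⟩
  filter_upwards [happ 2 one_lt_two, eventually_ge_atTop 1] with n hn hn1 x
  rcases eq_or_ne (φ0 n x) 0 with h0 | h0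
  · rw [h0]; positivity
  obtain ⟨hiff, hdiff⟩ := hn x
  have hψ0 : ψ n x ≠ 0 := fun h => h0 (hiff.2 h)
  have hφpos : 0 < φ0 n x := lt_of_le_of_ne ((hpot n).2 x) (Ne.symm h0)
  have hψpos : 0 < ψ n x := lt_of_le_of_ne ((hψ.1 n).2 x) (Ne.symm hψ0)
  have hlog : Real.log (φ0 n x) ≤ Real.log (ψ n x) + n * 2 := by
    have h := hdiff h0
    have := abs_le.1 h
    linarith [this.2]
  have hψM : Real.log (ψ n x) ≤ n * Real.log M := by
    have hn' : ψ n x ≤ M ^ n := by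
      obtain ⟨m, rfl⟩ : ∃ m, n = m + 1 := ⟨n - 1, by omega⟩
      exact hψn m x
    calc Real.log (ψ n x) ≤ Real.log (M ^ n) := Real.log_le_log hψpos hn'
      _ = n * Real.log M := by rw [Real.log_pow]
  calc φ0 n x = Real.exp (Real.log (φ0 n x)) := (Real.exp_log hφpos).symm
    _ ≤ Real.exp ((Real.log M + 2) * n) := by
        refine Real.exp_le_exp.2 ?_
        nlinarith

/-- frequently, some point has all potentials bounded below exponentially -/
lemma pot_lower (T : X → X) (φ : Fin k → ℕ → X → ℝ) (hφ : ∀ i, IsAsympSubAdditive T (φ i))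
    (hβ : betaBar (sumPot φ) ≠ ⊥) (cc : Fin k → ℝ) (hcc0 : ∀ i, 0 ≤ cc i)
    (hcc : ∀ i, ∀ᶠ n : ℕ in atTop, ∀ x, φ i n x ≤ Real.exp (cc i * n)) :
    ∃ b : ℝ, 0 ≤ b ∧ ∃ᶠ n : ℕ in atTop, 1 ≤ n ∧
      ∃ x : X, ∀ i, Real.exp (-(b * n)) ≤ φ i n x ∧ φ i n x ≤ Real.exp (b * n) := by
  obtain ⟨β₀, hβ₀⟩ := exists_coe_lt hβ
  have hccsum : (0:ℝ) ≤ ∑ i, cc i := Finset.sum_nonneg fun i _ => hcc0 i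
  set b : ℝ := |β₀| + (∑ i, cc i) + 1 with hbdef
  have hb0 : 0 ≤ b := by positivity
  rw [betaBar] at hβ₀
  have hfreq := frequently_lt_of_lt_limsup (by isBoundedDefault) hβ₀
  have hev : ∀ᶠ n : ℕ in atTop, (1 ≤ n ∧ ∀ i, ∀ x, φ i n x ≤ Real.exp (cc i * n)) := by
    filter_upwards [eventually_ge_atTop 1, eventually_all.2 hcc] with n h1 h2 using ⟨h1, h2⟩
  refine ⟨b, hb0, (hfreq.and_eventually hev).mono ?_⟩
  rintro n ⟨hlt, hn1, hup⟩
  refine ⟨hn1, ?_⟩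
  have hcont : Continuous (sumPot φ n) := continuous_finset_prod _ fun i _ => ((hφ i).1 n).1
  have hnn : ∀ x, 0 ≤ sumPot φ n x := fun x => Finset.prod_nonneg fun i _ => ((hφ i).1 n).2 x
  obtain ⟨x₀, _, hx₀⟩ := isCompact_univ.exists_isMaxOn univ_nonempty hcont.continuousOn
  rw [iSup_elog_eq hnn (fun y => hx₀ (mem_univ y))] at hlt
  have hnpos : (0:ℝ) < (n : ℝ) := by exact_mod_cast hn1
  have hninv : (0:ℝ) < ((n:ℝ))⁻¹ := by positivity
  rcases eq_or_ne (sumPot φ n x₀) 0 with hz | hz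
  · rw [hz, show elog 0 = (⊥:EReal) from if_pos rfl,
      EReal.coe_mul_bot_of_pos (by exact_mod_cast hninv)] at hlt
    exact absurd hlt (by simp)
  have hprodpos : 0 < sumPot φ n x₀ := lt_of_le_of_ne (hnn x₀) (Ne.symm hz)
  have hipos : ∀ i, 0 < φ i n x₀ := by
    intro i
    by_contra h
    push_neg at h
    have h0 : φ i n x₀ = 0 := le_antisymm h (((hφ i).1 n).2 x₀)
    exact hz (Finset.prod_eq_zero (Finset.mem_univ i) h0)
  rw [show elog (sumPot φ n x₀) = ((Real.log (sumPot φ n x₀) : ℝ) : EReal) from if_neg hz,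
    ← EReal.coe_mul, EReal.coe_lt_coe_iff] at hlt
  have hsum : (n:ℝ) * β₀ ≤ Real.log (sumPot φ n x₀) := by
    have h' := mul_lt_mul_of_pos_left hlt hnpos
    rw [← mul_assoc, mul_inv_cancel₀ hnpos.ne', one_mul] at h'
    exact h'.le
  have hlogprod : Real.log (sumPot φ n x₀) = ∑ i, Real.log (φ i n x₀) :=
    Real.log_prod (fun i _ => (hipos i).ne')
  refine ⟨x₀, fun j => ?_⟩
  have hupj : ∀ i, Real.log (φ i n x₀) ≤ cc i * n := fun i => by
    calc Real.log (φ i n x₀) ≤ Real.log (Real.exp (cc i * n)) :=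
          Real.log_le_log (hipos i) (hup i x₀)
      _ = cc i * n := Real.log_exp _
  have hlow : -(b * n) ≤ Real.log (φ j n x₀) := by
    have h1 : Real.log (φ j n x₀) =
        Real.log (sumPot φ n x₀) - ∑ i ∈ Finset.univ.erase j, Real.log (φ i n x₀) := by
      rw [hlogprod, ← Finset.add_sum_erase _ _ (Finset.mem_univ j)]
      ring
    have h2 : ∑ i ∈ Finset.univ.erase j, Real.log (φ i n x₀) ≤ (∑ i, cc i) * n := by
      calc ∑ i ∈ Finset.univ.erase j, Real.log (φ i n x₀)
          ≤ ∑ i ∈ Finset.univ.erase j, cc i * n :=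
            Finset.sum_le_sum fun i _ => hupj i
        _ ≤ ∑ i, cc i * n := Finset.sum_le_sum_of_subset_of_nonneg
            (Finset.erase_subset j _) (fun i _ _ => mul_nonneg (hcc0 i) (Nat.cast_nonneg n))
        _ = (∑ i, cc i) * n := by rw [Finset.sum_mul]
    rw [h1]
    have habs : -|β₀| ≤ β₀ := neg_abs_le β₀
    nlinarith
  constructor
  · calc Real.exp (-(b * n)) ≤ Real.exp (Real.log (φ j n x₀)) := Real.exp_le_exp.2 hlow
      _ = φ j n x₀ := Real.exp_log (hipos j)
  · calc φ j n x₀ = Real.exp (Real.log (φ j n x₀)) := (Real.exp_log (hipos j)).symm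
      _ ≤ Real.exp (b * n) := by
          refine Real.exp_le_exp.2 (le_trans (hupj j) ?_)
          have : cc j ≤ b := by
            have : cc j ≤ ∑ i, cc i := Finset.single_le_sum (fun i _ => hcc0 i) (Finset.mem_univ j)
            have h0 : 0 ≤ |β₀| := abs_nonneg β₀
            linarith
          nlinarith
end Pot

section Press
variable {X : Type*} [MetricSpace X] [CompactSpace X] [MeasurableSpace X] [BorelSpace X] [Nonempty X]
variable {k : ℕ}

lemma elogENN_zero : elogENN 0 = ⊥ := if_pos rfl

lemma elogENN_of_ne {S : ℝ≥0∞} (h0 : S ≠ 0) (ht : S ≠ ⊤) :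
    elogENN S = ((Real.log S.toReal : ℝ) : EReal) := by
  rw [elogENN, if_neg h0, if_neg ht]

lemma AA_bot {T : X → X} {ψ : ℕ → X → ℝ} {n : ℕ} {ε : ℝ} (h0 : sepSum T ψ n ε = 0) (hn : 1 ≤ n) :
    (((n : ℝ)⁻¹ : ℝ) : EReal) * elogENN (sepSum T ψ n ε) = ⊥ := by
  rw [h0, elogENN_zero, EReal.coe_mul_bot_of_pos]
  have : (0:ℝ) < (n:ℝ) := by exact_mod_cast hn
  exact_mod_cast inv_pos.2 this

lemma exp_prod_rpow (k : ℕ) (v : Fin k → ℝ) (t : ℝ) :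
    ∏ i, Real.exp (t) ^ (v i) = Real.exp (t * ∑ i, v i) := by
  calc ∏ i, Real.exp t ^ (v i) = ∏ i, Real.exp (t * v i) :=
        Finset.prod_congr rfl fun i _ => (Real.exp_mul _ _).symm
    _ = Real.exp (∑ i, t * v i) := (Real.exp_sum _ _).symm
    _ = Real.exp (t * ∑ i, v i) := by rw [← Finset.mul_sum]

lemma pressure_upper (T : X → X) (hT : Continuous T) (φ : Fin k → ℕ → X → ℝ)
    (hφ0 : ∀ i n x, 0 ≤ φ i n x) {b : ℝ} (hb : 0 ≤ b)
    (hsepc : ∀ ε : ℝ, 0 < ε → ∃ C, 1 ≤ C ∧ ∀ n : ℕ, (sepc T n ε : ℝ) ≤ C * Real.exp (b * n))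
    {cc : Fin k → ℝ} (hcc : ∀ i, ∀ᶠ n : ℕ in atTop, ∀ x, φ i n x ≤ Real.exp (cc i * n))
    {q : Fin k → ℝ} (hq : ∀ i, 0 < q i) :
    pressure T (weightedPot φ q) ≤ ((b + (∑ i, q i * cc i) + 1 : ℝ) : EReal) := by
  unfold pressure
  refine iSup₂_le fun ε hε => ?_
  obtain ⟨C, hC1, hC⟩ := hsepc ε hε
  have hC0 : (0:ℝ) < C := by linarith
  refine Filter.limsup_le_of_le (by isBoundedDefault) ?_
  filter_upwards [eventually_all.2 hcc, eventually_ge_atTop (max 1 ⌈Real.log C⌉₊)]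
    with n hupn hn
  have hn1 : 1 ≤ n := le_trans (le_max_left _ _) hn
  have hnpos : (0:ℝ) < (n:ℝ) := by exact_mod_cast hn1
  have hlogC : 0 ≤ Real.log C := Real.log_nonneg hC1
  have hnC : Real.log C ≤ (n:ℝ) := by
    calc Real.log C ≤ (⌈Real.log C⌉₊ : ℝ) := Nat.le_ceil _
      _ ≤ (n:ℝ) := by exact_mod_cast le_trans (le_max_right _ _) hn
  set Sq : ℝ := ∑ i, q i * cc i with hSq
  have hwp : ∀ x, weightedPot φ q n x ≤ Real.exp (Sq * n) := by
    intro x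
    have hSqn : ∑ i, (cc i * n) * q i = Sq * n := by
      rw [hSq, Finset.sum_mul]
      exact Finset.sum_congr rfl fun i _ => by ring
    calc weightedPot φ q n x ≤ ∏ i, Real.exp (cc i * n) ^ (q i) :=
          Finset.prod_le_prod (fun i _ => Real.rpow_nonneg (hφ0 i n x) _)
            (fun i _ => Real.rpow_le_rpow (hφ0 i n x) (hupn i x) (hq i).le)
      _ = ∏ i, Real.exp ((cc i * n) * q i) :=
          Finset.prod_congr rfl fun i _ => (Real.exp_mul _ _).symm
      _ = Real.exp (∑ i, (cc i * n) * q i) := (Real.exp_sum _ _).symm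
      _ = Real.exp (Sq * n) := by rw [hSqn]
  have hS : sepSum T (weightedPot φ q) n ε ≤
      ENNReal.ofReal (C * Real.exp (b * n) * Real.exp (Sq * n)) := by
    calc sepSum T (weightedPot φ q) n ε
        ≤ (sepc T n ε : ℝ≥0∞) * ENNReal.ofReal (Real.exp (Sq * n)) :=
          sepSum_le hT _ n hε hwp
      _ ≤ ENNReal.ofReal (C * Real.exp (b * n)) * ENNReal.ofReal (Real.exp (Sq * n)) := by
          refine mul_le_mul_left ?_ _
          rw [← ENNReal.ofReal_natCast]
          exact ENNReal.ofReal_le_ofReal (hC n)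
      _ = ENNReal.ofReal (C * Real.exp (b * n) * Real.exp (Sq * n)) :=
          (ENNReal.ofReal_mul (by positivity)).symm
  have hRpos : (0:ℝ) < C * Real.exp (b * n) * Real.exp (Sq * n) := by positivity
  have helog := elogENN_le_log hRpos hS
  have hlogR : Real.log (C * Real.exp (b * n) * Real.exp (Sq * n)) =
      Real.log C + b * n + Sq * n := by
    rw [Real.log_mul (by positivity) (by positivity), Real.log_mul (by positivity) (by positivity),
      Real.log_exp, Real.log_exp]
  rw [hlogR] at helog
  refine le_trans (inv_mul_le_coe hn1 helog) ?_
  rw [EReal.coe_le_coe_iff]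
  have h1 : (n:ℝ)⁻¹ * (Real.log C + b * n + Sq * n) =
      (n:ℝ)⁻¹ * Real.log C + b + Sq := by
    field_simp
  rw [h1]
  have h2 : (n:ℝ)⁻¹ * Real.log C ≤ 1 := by
    rw [inv_mul_le_iff₀ hnpos, mul_one]
    exact hnC
  linarith

lemma pressure_lower (T : X → X) (φ : Fin k → ℕ → X → ℝ)
    (hφ0 : ∀ i n x, 0 ≤ φ i n x) {bl : ℝ}
    (hfreq : ∃ᶠ n : ℕ in atTop, 1 ≤ n ∧
      ∃ x : X, ∀ i, Real.exp (-(bl * n)) ≤ φ i n x ∧ φ i n x ≤ Real.exp (bl * n))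
    {q : Fin k → ℝ} (hq : ∀ i, 0 < q i) :
    ((-(bl * ∑ i, q i) : ℝ) : EReal) ≤ pressure T (weightedPot φ q) := by
  have hmain : ((-(bl * ∑ i, q i) : ℝ) : EReal) ≤
      limsup (fun n : ℕ => (((n : ℝ)⁻¹ : ℝ) : EReal) *
        elogENN (sepSum T (weightedPot φ q) n 1)) atTop := by
    refine le_limsup_of_frequently_le ?_ (by isBoundedDefault)
    refine hfreq.mono ?_
    rintro n ⟨hn1, x, hx⟩
    have hnpos : (0:ℝ) < (n:ℝ) := by exact_mod_cast hn1
    have hwp : Real.exp ((-(bl * n)) * ∑ i, q i) ≤ weightedPot φ q n x := by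
      rw [← exp_prod_rpow k q (-(bl * n))]
      exact Finset.prod_le_prod (fun i _ => Real.rpow_nonneg (Real.exp_pos _).le _)
        (fun i _ => Real.rpow_le_rpow (Real.exp_pos _).le (hx i).1 (hq i).le)
    have hS : ENNReal.ofReal (Real.exp ((-(bl * n)) * ∑ i, q i)) ≤
        sepSum T (weightedPot φ q) n 1 :=
      le_trans (ENNReal.ofReal_le_ofReal hwp) (sepSum_ge T _ n 1 x)
    have helog := log_le_elogENN (Real.exp_pos _) hS
    rw [Real.log_exp] at helog
    refine le_trans ?_ (coe_le_inv_mul hn1 helog)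
    rw [EReal.coe_le_coe_iff]
    have heq : (n:ℝ)⁻¹ * ((-(bl * (n:ℝ))) * ∑ i, q i) = -(bl * ∑ i, q i) := by
      field_simp
    rw [heq]
  refine le_trans hmain ?_
  unfold pressure
  exact le_iSup₂ (f := fun (ε : ℝ) (_ : 0 < ε) => limsup (fun n : ℕ =>
    (((n : ℝ)⁻¹ : ℝ) : EReal) * elogENN (sepSum T (weightedPot φ q) n ε)) atTop) 1 one_pos

end Press

section Conv
variable {X : Type*} [MetricSpace X] [CompactSpace X] [MeasurableSpace X] [BorelSpace X] [Nonempty X]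
variable {k : ℕ}

lemma limsup_slice_le (T : X → X) (ψ : ℕ → X → ℝ) {ε : ℝ} (hε : 0 < ε) {u : ℝ}
    (hu : pressure T ψ ≤ (u : EReal)) :
    limsup (fun n : ℕ => (((n : ℝ)⁻¹ : ℝ) : EReal) * elogENN (sepSum T ψ n ε)) atTop
      ≤ (u : EReal) := by
  refine le_trans ?_ hu
  unfold pressure
  exact le_iSup₂ (f := fun (ε : ℝ) (_ : 0 < ε) => limsup (fun n : ℕ =>
    (((n : ℝ)⁻¹ : ℝ) : EReal) * elogENN (sepSum T ψ n ε)) atTop) ε hε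

lemma pressure_convex_le (T : X → X) (hT : Continuous T) (φ : Fin k → ℕ → X → ℝ)
    (hφ0 : ∀ i n x, 0 ≤ φ i n x) (hc : ∀ i (n : ℕ), Continuous (φ i n))
    {q q' : Fin k → ℝ} (hq : ∀ i, 0 < q i) (hq' : ∀ i, 0 < q' i)
    {θa θb : ℝ} (ha : 0 < θa) (hb : 0 < θb) (hab : θa + θb = 1)
    {u u' : ℝ} (hu : pressure T (weightedPot φ q) ≤ (u : EReal))
    (hu' : pressure T (weightedPot φ q') ≤ (u' : EReal)) :
    pressure T (weightedPot φ (θa • q + θb • q')) ≤ ((θa * u + θb * u' : ℝ) : EReal) := by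
  refine le_coe_of_forall_add fun δ hδ => ?_
  unfold pressure
  refine iSup₂_le fun ε hε => ?_
  have hev1 : ∀ᶠ n : ℕ in atTop, (((n : ℝ)⁻¹ : ℝ) : EReal) *
      elogENN (sepSum T (weightedPot φ q) n ε) < ((u + δ : ℝ) : EReal) :=
    eventually_lt_of_limsup_lt (lt_of_le_of_lt (limsup_slice_le T _ hε hu)
      (by exact_mod_cast (lt_add_of_pos_right u hδ)))
  have hev2 : ∀ᶠ n : ℕ in atTop, (((n : ℝ)⁻¹ : ℝ) : EReal) *
      elogENN (sepSum T (weightedPot φ q') n ε) < ((u' + δ : ℝ) : EReal) :=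
    eventually_lt_of_limsup_lt (lt_of_le_of_lt (limsup_slice_le T _ hε hu')
      (by exact_mod_cast (lt_add_of_pos_right u' hδ)))
  refine Filter.limsup_le_of_le (by isBoundedDefault) ?_
  filter_upwards [hev1, hev2, eventually_ge_atTop 1] with n h1 h2 hn1
  have hpoteq : weightedPot φ (θa • q + θb • q') = fun (m : ℕ) (x : X) =>
      weightedPot φ q m x ^ θa * weightedPot φ q' m x ^ θb := by
    funext m x
    exact weightedPot_comb φ hφ0 (fun i => (hq i).le) (fun i => (hq' i).le) ha.le hb.le m x
  have hhold : sepSum T (weightedPot φ (θa • q + θb • q')) n ε ≤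
      (sepSum T (weightedPot φ q) n ε) ^ θa * (sepSum T (weightedPot φ q') n ε) ^ θb := by
    rw [hpoteq]
    exact sepSum_holder T n ε (fun x => weightedPot_nonneg φ hφ0 q n x)
      (fun x => weightedPot_nonneg φ hφ0 q' n x) ha hb hab
  rcases eq_or_ne (sepSum T (weightedPot φ (θa • q + θb • q')) n ε) 0 with h0 | h0
  · rw [AA_bot h0 hn1]
    exact bot_le
  have hq0 : sepSum T (weightedPot φ q) n ε ≠ 0 := by
    intro hz
    rw [hz, ENNReal.zero_rpow_of_pos ha, zero_mul] at hhold
    exact h0 (le_antisymm hhold zero_le)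
  have hq'0 : sepSum T (weightedPot φ q') n ε ≠ 0 := by
    intro hz
    rw [hz, ENNReal.zero_rpow_of_pos hb, mul_zero] at hhold
    exact h0 (le_antisymm hhold zero_le)
  have hqt : sepSum T (weightedPot φ q) n ε ≠ ⊤ :=
    sepSum_ne_top hT hε (weightedPot_continuous φ hc hq n)
  have hq't : sepSum T (weightedPot φ q') n ε ≠ ⊤ :=
    sepSum_ne_top hT hε (weightedPot_continuous φ hc hq' n)
  obtain ⟨a1, ha1⟩ : ∃ a : ℝ, a = (sepSum T (weightedPot φ q) n ε).toReal := ⟨_, rfl⟩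
  obtain ⟨a2, ha2⟩ : ∃ a : ℝ, a = (sepSum T (weightedPot φ q') n ε).toReal := ⟨_, rfl⟩
  have ha1pos : 0 < a1 := ha1 ▸ ENNReal.toReal_pos hq0 hqt
  have ha2pos : 0 < a2 := ha2 ▸ ENNReal.toReal_pos hq'0 hq't
  have hS : sepSum T (weightedPot φ (θa • q + θb • q')) n ε ≤
      ENNReal.ofReal (a1 ^ θa * a2 ^ θb) := by
    refine hhold.trans (le_of_eq ?_)
    rw [ENNReal.ofReal_mul (Real.rpow_nonneg ha1pos.le _),
      ← ENNReal.ofReal_rpow_of_nonneg ha1pos.le ha.le,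
      ← ENNReal.ofReal_rpow_of_nonneg ha2pos.le hb.le,
      ha1, ha2, ENNReal.ofReal_toReal hqt, ENNReal.ofReal_toReal hq't]
  have hRpos : (0:ℝ) < a1 ^ θa * a2 ^ θb := by positivity
  have helog := elogENN_le_log hRpos hS
  have hlog2 : Real.log (a1 ^ θa * a2 ^ θb) = θa * Real.log a1 + θb * Real.log a2 := by
    rw [Real.log_mul (by positivity) (by positivity), Real.log_rpow ha1pos, Real.log_rpow ha2pos]
  rw [hlog2] at helog
  refine le_trans (inv_mul_le_coe hn1 helog) ?_
  rw [EReal.coe_le_coe_iff]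
  have hA1 : (n:ℝ)⁻¹ * Real.log a1 < u + δ := by
    rw [elogENN_of_ne hq0 hqt, ← ha1, ← EReal.coe_mul] at h1
    exact_mod_cast h1
  have hA2 : (n:ℝ)⁻¹ * Real.log a2 < u' + δ := by
    rw [elogENN_of_ne hq'0 hq't, ← ha2, ← EReal.coe_mul] at h2
    exact_mod_cast h2
  calc (n:ℝ)⁻¹ * (θa * Real.log a1 + θb * Real.log a2)
      = θa * ((n:ℝ)⁻¹ * Real.log a1) + θb * ((n:ℝ)⁻¹ * Real.log a2) := by ring
    _ ≤ θa * (u + δ) + θb * (u' + δ) :=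
        add_le_add (mul_le_mul_of_nonneg_left hA1.le ha.le)
          (mul_le_mul_of_nonneg_left hA2.le hb.le)
    _ = θa * u + θb * u' + δ := by
        have : θa * (u + δ) + θb * (u' + δ) = θa * u + θb * u' + (θa + θb) * δ := by ring
        rw [this, hab, one_mul]

lemma pressure_single_le (T : X → X) (hT : Continuous T) (φ : Fin k → ℕ → X → ℝ)
    (hφ0 : ∀ i n x, 0 ≤ φ i n x) (hc : ∀ i (n : ℕ), Continuous (φ i n))
    {q : Fin k → ℝ} (hq : ∀ i, 0 < q i) (i : Fin k)
    {u ρ : ℝ} (hu : pressure T (weightedPot φ q) ≤ (u : EReal))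
    (hρ : betaBar (φ i) < (ρ : EReal)) :
    pressure T (weightedPot φ (q + Pi.single i 1)) ≤ ((u + ρ : ℝ) : EReal) := by
  refine le_coe_of_forall_add fun δ hδ => ?_
  unfold pressure
  refine iSup₂_le fun ε hε => ?_
  have hev1 : ∀ᶠ n : ℕ in atTop, (((n : ℝ)⁻¹ : ℝ) : EReal) *
      elogENN (sepSum T (weightedPot φ q) n ε) < ((u + δ : ℝ) : EReal) :=
    eventually_lt_of_limsup_lt (lt_of_le_of_lt (limsup_slice_le T _ hε hu)
      (by exact_mod_cast (lt_add_of_pos_right u hδ)))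
  have hρ' : limsup (fun n : ℕ => (((n : ℝ)⁻¹ : ℝ) : EReal) * ⨆ x : X, elog (φ i n x)) atTop
      < (ρ : EReal) := by rw [← betaBar]; exact hρ
  have hev2 : ∀ᶠ n : ℕ in atTop, (((n : ℝ)⁻¹ : ℝ) : EReal) * (⨆ x : X, elog (φ i n x))
      < (ρ : EReal) := eventually_lt_of_limsup_lt hρ'
  refine Filter.limsup_le_of_le (by isBoundedDefault) ?_
  filter_upwards [hev1, hev2, eventually_ge_atTop 1] with n h1 h2 hn1
  have hpoteq : weightedPot φ (q + Pi.single i 1) = fun (m : ℕ) (x : X) =>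
      weightedPot φ q m x * φ i m x := by
    funext m x
    exact weightedPot_add_single φ hφ0 (fun j => (hq j).le) i m x
  obtain ⟨y₀, _, hy₀⟩ := isCompact_univ.exists_isMaxOn univ_nonempty (hc i n).continuousOn
  obtain ⟨Mi, hMi⟩ : ∃ m : ℝ, m = φ i n y₀ := ⟨_, rfl⟩
  have hS : sepSum T (weightedPot φ (q + Pi.single i 1)) n ε ≤
      sepSum T (weightedPot φ q) n ε * ENNReal.ofReal Mi := by
    rw [hpoteq]
    refine iSup₂_le fun E hE => ?_
    calc ∑ x ∈ E, ENNReal.ofReal (weightedPot φ q n x * φ i n x)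
        ≤ ∑ x ∈ E, ENNReal.ofReal (weightedPot φ q n x) * ENNReal.ofReal Mi := by
          refine Finset.sum_le_sum fun x _ => ?_
          rw [ENNReal.ofReal_mul (weightedPot_nonneg φ hφ0 q n x)]
          exact mul_le_mul_right (ENNReal.ofReal_le_ofReal (hMi ▸ hy₀ (mem_univ x))) _
      _ = (∑ x ∈ E, ENNReal.ofReal (weightedPot φ q n x)) * ENNReal.ofReal Mi :=
          (Finset.sum_mul _ _ _).symm
      _ ≤ sepSum T (weightedPot φ q) n ε * ENNReal.ofReal Mi := by
          refine mul_le_mul_left (le_iSup₂ (f := fun (E : Finset X) (_ : IsSep T n ε E) =>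
            ∑ y ∈ E, ENNReal.ofReal (weightedPot φ q n y)) E hE) _
  rcases eq_or_ne (sepSum T (weightedPot φ (q + Pi.single i 1)) n ε) 0 with h0 | h0
  · rw [AA_bot h0 hn1]
    exact bot_le
  have hMi0 : ENNReal.ofReal Mi ≠ 0 := by
    intro hz
    rw [hz, mul_zero] at hS
    exact h0 (le_antisymm hS zero_le)
  have hMipos : 0 < Mi := by
    by_contra hle
    push_neg at hle
    exact hMi0 (ENNReal.ofReal_eq_zero.2 hle)
  have hq0 : sepSum T (weightedPot φ q) n ε ≠ 0 := by
    intro hz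
    rw [hz, zero_mul] at hS
    exact h0 (le_antisymm hS zero_le)
  have hqt : sepSum T (weightedPot φ q) n ε ≠ ⊤ :=
    sepSum_ne_top hT hε (weightedPot_continuous φ hc hq n)
  obtain ⟨a1, ha1⟩ : ∃ a : ℝ, a = (sepSum T (weightedPot φ q) n ε).toReal := ⟨_, rfl⟩
  have ha1pos : 0 < a1 := ha1 ▸ ENNReal.toReal_pos hq0 hqt
  have hS' : sepSum T (weightedPot φ (q + Pi.single i 1)) n ε ≤
      ENNReal.ofReal (a1 * Mi) := by
    refine hS.trans (le_of_eq ?_)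
    rw [ENNReal.ofReal_mul ha1pos.le, ha1, ENNReal.ofReal_toReal hqt]
  have hRpos : (0:ℝ) < a1 * Mi := mul_pos ha1pos hMipos
  have helog := elogENN_le_log hRpos hS'
  rw [Real.log_mul ha1pos.ne' hMipos.ne'] at helog
  refine le_trans (inv_mul_le_coe hn1 helog) ?_
  rw [EReal.coe_le_coe_iff]
  have hA1 : (n:ℝ)⁻¹ * Real.log a1 < u + δ := by
    rw [elogENN_of_ne hq0 hqt, ← ha1, ← EReal.coe_mul] at h1
    exact_mod_cast h1
  have hA2 : (n:ℝ)⁻¹ * Real.log Mi < ρ := by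
    rw [iSup_elog_eq (hφ0 i n) (fun y => hy₀ (mem_univ y)), ← hMi,
      show elog Mi = ((Real.log Mi : ℝ) : EReal) from if_neg hMipos.ne', ← EReal.coe_mul] at h2
    exact_mod_cast h2
  calc (n:ℝ)⁻¹ * (Real.log a1 + Real.log Mi)
      = (n:ℝ)⁻¹ * Real.log a1 + (n:ℝ)⁻¹ * Real.log Mi := by ring
    _ ≤ (u + δ) + ρ := add_le_add hA1.le hA2.le
    _ = u + ρ + δ := by ring

end Conv

section Orth
variable {k : ℕ}

lemma isOpen_posOrth (k : ℕ) : IsOpen (posOrth k) := by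
  have h : posOrth k = ⋂ i, (fun q : Fin k → ℝ => q i) ⁻¹' Set.Ioi 0 := by
    ext q
    simp [posOrth, mem_iInter]
  rw [h]
  exact isOpen_iInter_of_finite fun i => isOpen_Ioi.preimage (continuous_apply i)

lemma convex_posOrth (k : ℕ) : Convex ℝ (posOrth k) := by
  intro x hx y hy aa bb haa hbb hab
  intro j
  simp only [Pi.add_apply, Pi.smul_apply, smul_eq_mul]
  rcases eq_or_lt_of_le haa with h0 | h0
  · have hbb1 : bb = 1 := by linarith
    rw [← h0, hbb1]
    simpa using hy j
  · have h1 : 0 < aa * x j := mul_pos h0 (hx j)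
    have h2 : 0 ≤ bb * y j := mul_nonneg hbb (hy j).le
    linarith

end Orth
end S14

/-- Proposition 3.2: if `h_top(T) < ∞` and `β̄(Φ₁+⋯+Φ_k) > -∞`, then
the pressure function `P_Φ` is real, continuous and convex on the positive orthant,
and every subgradient `a` of `P_Φ` there satisfies `a i ≤ β̄(Φ i)`. -/
theorem stmt14 {X : Type*} [MetricSpace X] [CompactSpace X] [MeasurableSpace X] [BorelSpace X] [Nonempty X] {k : ℕ}
    (T : X → X) (hT : Continuous T) (φ : Fin k → ℕ → X → ℝ)
    (hφ : ∀ i, IsAsympSubAdditive T (φ i))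
    (htop : entOf T Set.univ ≠ ⊤) (hβ : betaBar (sumPot φ) ≠ ⊥) :
    ∃ F : (Fin k → ℝ) → ℝ,
      (∀ q ∈ posOrth k, (F q : EReal) = pressure T (weightedPot φ q)) ∧
      ContinuousOn F (posOrth k) ∧ ConvexOn ℝ (posOrth k) F ∧
      ∀ q ∈ posOrth k, ∀ a : Fin k → ℝ, IsSubgrad (posOrth k) F q a →
        ∀ i, ((a i : ℝ) : EReal) ≤ betaBar (φ i) := by
  classical
  have hφ0 : ∀ i n x, 0 ≤ φ i n x := fun i n x => ((hφ i).1 n).2 x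
  have hc : ∀ i (n : ℕ), Continuous (φ i n) := fun i n => ((hφ i).1 n).1
  obtain ⟨b, hb0, hsepc⟩ := S14.sepc_exp_bound T hT htop
  choose cc0 hcc0 hcc using fun i => S14.pot_upper T (hφ i)
  obtain ⟨bl, hbl0, hfreq⟩ := S14.pot_lower T φ hφ hβ cc0 hcc0 hcc
  set F : (Fin k → ℝ) → ℝ := fun q => (pressure T (weightedPot φ q)).toReal with hF
  have hne : ∀ q ∈ posOrth k,
      pressure T (weightedPot φ q) ≠ ⊤ ∧ pressure T (weightedPot φ q) ≠ ⊥ := by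
    intro q hq
    constructor
    · exact ne_top_of_le_ne_top (EReal.coe_ne_top _)
        (S14.pressure_upper T hT φ hφ0 hb0 hsepc hcc (fun i => hq i))
    · intro hbot
      have hle := S14.pressure_lower T φ hφ0 hfreq (fun i => hq i)
      rw [hbot, le_bot_iff] at hle
      exact EReal.coe_ne_bot _ hle
  have hFeq : ∀ q ∈ posOrth k, (F q : EReal) = pressure T (weightedPot φ q) := fun q hq =>
    EReal.coe_toReal (hne q hq).1 (hne q hq).2
  have hFle : ∀ q ∈ posOrth k, pressure T (weightedPot φ q) ≤ ((F q : ℝ) : EReal) :=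
    fun q hq => le_of_eq (hFeq q hq).symm
  have hconv : ConvexOn ℝ (posOrth k) F := by
    refine ⟨S14.convex_posOrth k, ?_⟩
    intro x hx y hy aa bb haa hbb hab
    rcases eq_or_lt_of_le haa with h0 | h0
    · have hbb1 : bb = 1 := by linarith
      rw [← h0, hbb1]
      simp
    rcases eq_or_lt_of_le hbb with h0' | h0'
    · have haa1 : aa = 1 := by linarith
      rw [← h0', haa1]
      simp
    have hmid : (aa • x + bb • y) ∈ posOrth k :=
      S14.convex_posOrth k hx hy haa hbb hab
    have hkey := S14.pressure_convex_le T hT φ hφ0 hc (fun i => hx i) (fun i => hy i)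
      h0 h0' hab (hFle x hx) (hFle y hy)
    rw [← hFeq _ hmid] at hkey
    have : F (aa • x + bb • y) ≤ aa * F x + bb * F y := by exact_mod_cast hkey
    simpa [smul_eq_mul] using this
  refine ⟨F, hFeq, hconv.continuousOn (S14.isOpen_posOrth k), hconv, ?_⟩
  intro q hq a ha i
  have key : ∀ ρ : ℝ, betaBar (φ i) < (ρ : EReal) → a i ≤ ρ := by
    intro ρ hρ
    have hq' : (q + Pi.single i 1) ∈ posOrth k := by
      intro j
      rcases eq_or_ne j i with rfl | hne'
      · simp only [Pi.add_apply, Pi.single_eq_same]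
        have := hq j
        linarith
      · simp only [Pi.add_apply, Pi.single_eq_of_ne hne', add_zero]
        exact hq j
    have hp := S14.pressure_single_le T hT φ hφ0 hc (fun j => hq j) i (hFle q hq) hρ
    rw [← hFeq _ hq'] at hp
    have hF' : F (q + Pi.single i 1) ≤ F q + ρ := by exact_mod_cast hp
    have hsub := ha (q + Pi.single i 1) hq'
    have hdot : dotp a ((q + Pi.single i 1) - q) = a i := by
      have hsingle : (q + Pi.single i 1) - q = (Pi.single i 1 : Fin k → ℝ) := by
        funext j
        simp
      rw [hsingle]
      unfold dotp
      rw [Finset.sum_eq_single i (fun j _ hj => by rw [Pi.single_eq_of_ne hj, mul_zero])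
        (fun h => absurd (Finset.mem_univ i) h)]
      rw [Pi.single_eq_same, mul_one]
    rw [hdot] at hsub
    linarith
  rcases eq_or_ne (betaBar (φ i)) ⊤ with htop' | hnetop
  · rw [htop']
    exact le_top
  rcases eq_or_ne (betaBar (φ i)) ⊥ with hbot | hnebot
  · exfalso
    have := key (a i - 1) (by rw [hbot]; exact bot_lt_iff_ne_bot.2 (EReal.coe_ne_bot _))
    linarith
  set β : ℝ := (betaBar (φ i)).toReal with hβdef
  have hβeq : betaBar (φ i) = (β : EReal) := (EReal.coe_toReal hnetop hnebot).symm
  rw [hβeq]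
  by_contra hcon
  rw [not_le, EReal.coe_lt_coe_iff] at hcon
  have hmid := key ((β + a i) / 2) (by rw [hβeq]; exact_mod_cast (by linarith : β < (β + a i) / 2))
  linarith
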